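/- With C_k the discrete Cantor set of base M with alphabet A and N = M^k, define r_k = ‖1_{C_k} F_N 1_{C_k}‖ (operator norm on ℂ^N). Then for all k₁, k₂ ≥ 1, r_{k₁+k₂} ≤ r_{k₁}·r_{k₂}. -/

import Mathlib

open scoped Matrix

/-- The unitary discrete Fourier transform matrix
`(F_N)_{jℓ} = N^{-1/2} exp(-2πi jℓ/N)`. -/
noncomputable def dftMat (N : ℕ) : Matrix (Fin N) (Fin N) ℂ :=
  Matrix.of fun j ℓ => ((N : ℂ) ^ (-(1/2 : ℂ))) *
    Complex.exp (-2 * Real.pi * Complex.I * ((j : ℕ) : ℂ) * ((ℓ : ℕ) : ℂ) / (N : ℂ))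

open scoped Classical in
/-- The diagonal matrix of the coordinate projection onto indices in `S`. -/
noncomputable def projMat {N : ℕ} (S : Set ℕ) : Matrix (Fin N) (Fin N) ℂ :=
  Matrix.of fun j ℓ => if j = ℓ ∧ (j : ℕ) ∈ S then 1 else 0

/-- The discrete Cantor set: numbers all of whose base-`M` digits in positions `< k`
lie in the alphabet `A`. Restricted to `{0,…,M^k-1}` this is
`C_k = {a₀ + a₁M + ⋯ + a_{k-1}M^{k-1} : a_j ∈ A}`. -/
def cantorDigits (M k : ℕ) (A : Finset ℕ) : Set ℕ :=
  {n | ∀ i < k, (n / M ^ i) % M ∈ A}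

/-- The operator `1_{C_k} F_N 1_{C_k}` on `ℂ^N`, `N = M^k`, with the Euclidean norm. -/
noncomputable def cantorOp (M k : ℕ) (A : Finset ℕ) :
    EuclideanSpace ℂ (Fin (M ^ k)) →L[ℂ] EuclideanSpace ℂ (Fin (M ^ k)) :=
  LinearMap.toContinuousLinearMap
    (Matrix.toEuclideanLin
      (projMat (cantorDigits M k A) * dftMat (M ^ k) * projMat (cantorDigits M k A)))

/-- `r_k = ‖1_{C_k} F_N 1_{C_k}‖`, the operator norm on `ℂ^N`, `N = M^k`. -/
noncomputable def rk (M : ℕ) (A : Finset ℕ) (k : ℕ) : ℝ := ‖cantorOp M k A‖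

/-! ### Auxiliary lemmas -/

section Aux

open Complex Real

lemma cantor_split (M : ℕ) (hM : 0 < M) (A : Finset ℕ) (k k' : ℕ) (a b : ℕ) (ha : a < M^k) :
    (a + M^k * b) ∈ cantorDigits M (k + k') A ↔
      (a ∈ cantorDigits M k A ∧ b ∈ cantorDigits M k' A) := by
  have h1 : ∀ i < k, ((a + M^k*b) / M^i) % M = (a / M^i) % M := by
    intro i hi
    have hk : M^k = M^i * (M^(k-i-1) * M) := by
      rw [← pow_succ, ← pow_add]; congr 1; omega
    rw [hk, show a + M^i * (M^(k-i-1)*M) * b = a + M^i * (M^(k-i-1)*M*b) by ring,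
      Nat.add_mul_div_left _ _ (pow_pos hM i),
      show M^(k-i-1)*M*b = (M^(k-i-1)*b)*M by ring, Nat.add_mul_mod_self_right]
  have h2 : ∀ i, ((a + M^k*b) / M^(k+i)) % M = (b / M^i) % M := by
    intro i
    rw [pow_add, ← Nat.div_div_eq_div_mul, Nat.add_mul_div_left _ _ (pow_pos hM k),
      Nat.div_eq_of_lt ha, Nat.zero_add]
  constructor
  · intro h
    refine ⟨fun i hi => ?_, fun i hi => ?_⟩
    · have := h i (by omega); rwa [h1 i hi] at this
    · have := h (k+i) (by omega); rwa [h2 i] at this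
  · rintro ⟨hA, hB⟩ i hi
    rcases Nat.lt_or_ge i k with hik | hik
    · rw [h1 i hik]; exact hA i hik
    · obtain ⟨i', rfl⟩ : ∃ i', i = k + i' := ⟨i - k, by omega⟩
      rw [h2 i']; exact hB i' (by omega)

open Classical in
lemma tmat_entry {N : ℕ} (S : Set ℕ) (B : Matrix (Fin N) (Fin N) ℂ) (j ℓ : Fin N) :
    ((projMat S * B * projMat S : Matrix (Fin N) (Fin N) ℂ)) j ℓ
      = (if (j : ℕ) ∈ S then 1 else 0) * B j ℓ * (if (ℓ : ℕ) ∈ S then 1 else 0) := by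
  have h1 : ((projMat S * B : Matrix (Fin N) (Fin N) ℂ)) j ℓ
      = (if (j : ℕ) ∈ S then 1 else 0) * B j ℓ := by
    rw [Matrix.mul_apply]
    rw [Finset.sum_eq_single j]
    · simp [projMat]
    · intro m _ hm; simp [projMat, Ne.symm hm]
    · simp
  rw [Matrix.mul_apply, Finset.sum_eq_single ℓ]
  · rw [h1]; simp [projMat]
  · intro m _ hm; simp [projMat, hm, Matrix.mul_apply]
  · simp

lemma cpow_split (n1 n2 : ℕ) :
    ((n1 * n2 : ℕ) : ℂ) ^ (-(1/2 : ℂ))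
      = ((n1 : ℂ) ^ (-(1/2 : ℂ))) * ((n2 : ℂ) ^ (-(1/2 : ℂ))) := by
  have h1 : ((n1 : ℂ)) = ((n1 : ℝ) : ℂ) := by push_cast; ring
  have h2 : ((n2 : ℂ)) = ((n2 : ℝ) : ℂ) := by push_cast; ring
  have h3 : (((n1 * n2 : ℕ)) : ℂ) = ((n1 : ℝ) : ℂ) * ((n2 : ℝ) : ℂ) := by push_cast; ring
  rw [h1, h2, h3, Complex.mul_cpow_ofReal_nonneg (Nat.cast_nonneg n1) (Nat.cast_nonneg n2)]

lemma exp_split (n1 n2 : ℕ) (h1 : (n1:ℂ) ≠ 0) (h2 : (n2:ℂ) ≠ 0) (j1 l1 j2 l2 : ℕ) :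
    Complex.exp (-2*(π:ℝ)*I * ((j2 + n2*j1 : ℕ):ℂ) * ((l1 + n1*l2 : ℕ):ℂ) / ((n1*n2 : ℕ):ℂ))
      = Complex.exp (-2*(π:ℝ)*I * (j1:ℂ) * (l1:ℂ) / (n1:ℂ))
        * (Complex.exp (-2*(π:ℝ)*I * (j2:ℂ) * (l1:ℂ) / ((n1*n2:ℕ):ℂ))
          * Complex.exp (-2*(π:ℝ)*I * (j2:ℂ) * (l2:ℂ) / (n2:ℂ))) := by
  rw [← Complex.exp_add, ← Complex.exp_add]
  have key : -2*(π:ℝ)*I * ((j2 + n2*j1 : ℕ):ℂ) * ((l1 + n1*l2 : ℕ):ℂ) / ((n1*n2 : ℕ):ℂ)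
      = (-2*(π:ℝ)*I * (j1:ℂ) * (l1:ℂ) / (n1:ℂ)
        + (-2*(π:ℝ)*I * (j2:ℂ) * (l1:ℂ) / ((n1*n2:ℕ):ℂ)
          + -2*(π:ℝ)*I * (j2:ℂ) * (l2:ℂ) / (n2:ℂ)))
        + ((-(j1*l2 : ℤ) : ℂ)) * (2*(π:ℝ)*I) := by
    push_cast
    field_simp
    ring
  rw [key, Complex.exp_add]
  rw [show ((-(j1*l2 : ℤ) : ℂ)) = (((-(j1*l2 : ℤ)) : ℤ) : ℂ) by push_cast; ring]
  rw [Complex.exp_int_mul_two_pi_mul_I, mul_one]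

lemma norm_phase (N j l : ℕ) :
    ‖Complex.exp (-2*(π:ℝ)*I*(j:ℂ)*(l:ℂ)/(N:ℂ))‖ = 1 := by
  rcases Nat.eq_zero_or_pos N with h | h
  · simp [h]
  · rw [show -2*(π:ℝ)*I*(j:ℂ)*(l:ℂ)/(N:ℂ)
        = ((-2*π*(j:ℝ)*(l:ℝ)/(N:ℝ) : ℝ) : ℂ) * I by push_cast; ring]
    rw [Complex.norm_exp_ofReal_mul_I]

lemma ite_and_split (P Q : Prop) [Decidable P] [Decidable Q] :
    (if P ∧ Q then (1:ℂ) else 0) = (if P then (1:ℂ) else 0) * (if Q then (1:ℂ) else 0) := by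
  split_ifs with h h1 h2 <;> simp_all

/-- The Cantor matrix. -/
noncomputable def Tm (M k : ℕ) (A : Finset ℕ) : Matrix (Fin (M^k)) (Fin (M^k)) ℂ :=
  projMat (cantorDigits M k A) * dftMat (M^k) * projMat (cantorDigits M k A)

lemma sq_bound (M k : ℕ) (A : Finset ℕ) (w : Fin (M^k) → ℂ) :
    ∑ i, ‖(Tm M k A *ᵥ w) i‖^2 ≤ (rk M A k)^2 * ∑ i, ‖w i‖^2 := by
  have h := (cantorOp M k A).le_opNorm ((WithLp.equiv 2 (Fin (M^k) → ℂ)).symm w)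
  have happ : cantorOp M k A ((WithLp.equiv 2 (Fin (M^k) → ℂ)).symm w)
      = (WithLp.equiv 2 (Fin (M^k) → ℂ)).symm (Tm M k A *ᵥ w) := by
    simp only [cantorOp, LinearMap.coe_toContinuousLinearMap']
    exact Matrix.toEuclideanLin_apply_piLp_toLp _ w
  rw [happ, EuclideanSpace.norm_eq, EuclideanSpace.norm_eq] at h
  simp only [WithLp.equiv_symm_apply, WithLp.ofLp_toLp, PiLp.toLp_apply] at h
  have ha : (0:ℝ) ≤ ∑ i, ‖(Tm M k A *ᵥ w) i‖^2 :=
    Finset.sum_nonneg fun i _ => sq_nonneg _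
  have hb : (0:ℝ) ≤ ∑ i, ‖w i‖^2 := Finset.sum_nonneg fun i _ => sq_nonneg _
  have := mul_self_le_mul_self (Real.sqrt_nonneg _) h
  rw [Real.mul_self_sqrt ha] at this
  calc ∑ i, ‖(Tm M k A *ᵥ w) i‖^2
      ≤ (rk M A k * Real.sqrt (∑ i, ‖w i‖^2)) * (rk M A k * Real.sqrt (∑ i, ‖w i‖^2)) := this
    _ = (rk M A k)^2 * (Real.sqrt (∑ i, ‖w i‖^2) * Real.sqrt (∑ i, ‖w i‖^2)) := by ring
    _ = (rk M A k)^2 * ∑ i, ‖w i‖^2 := by rw [Real.mul_self_sqrt hb]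

/-- Row index equivalence. -/
def eR (M k1 k2 : ℕ) : Fin (M^k1) × Fin (M^k2) ≃ Fin (M^(k1+k2)) :=
  finProdFinEquiv.trans (finCongr (pow_add M k1 k2).symm)

/-- Column index equivalence. -/
def eCq (M k1 k2 : ℕ) : Fin (M^k2) × Fin (M^k1) ≃ Fin (M^(k1+k2)) :=
  finProdFinEquiv.trans (finCongr (by rw [pow_add, Nat.mul_comm]))

lemma eR_coe (M k1 k2 : ℕ) (p : Fin (M^k1) × Fin (M^k2)) :
    ((eR M k1 k2 p : Fin (M^(k1+k2))) : ℕ) = (p.2 : ℕ) + M^k2 * (p.1 : ℕ) := by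
  simp [eR]

lemma eCq_coe (M k1 k2 : ℕ) (q : Fin (M^k2) × Fin (M^k1)) :
    ((eCq M k1 k2 q : Fin (M^(k1+k2))) : ℕ) = (q.2 : ℕ) + M^k1 * (q.1 : ℕ) := by
  simp [eCq]

/-- The phase factor. -/
noncomputable def ph (M k1 k2 : ℕ) (j2 : Fin (M^k2)) (l1 : Fin (M^k1)) : ℂ :=
  Complex.exp (-2*(π:ℝ)*I*((j2:ℕ):ℂ)*((l1:ℕ):ℂ)/((M^(k1+k2) : ℕ):ℂ))

lemma norm_ph (M k1 k2 : ℕ) (j2 : Fin (M^k2)) (l1 : Fin (M^k1)) :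
    ‖ph M k1 k2 j2 l1‖ = 1 := norm_phase _ _ _

open Classical in
lemma entry_split (M : ℕ) (hM : 0 < M) (A : Finset ℕ) (k1 k2 : ℕ)
    (j1 l1 : Fin (M^k1)) (j2 l2 : Fin (M^k2)) :
    Tm M (k1+k2) A (eR M k1 k2 (j1, j2)) (eCq M k1 k2 (l2, l1))
      = Tm M k1 A j1 l1 * (ph M k1 k2 j2 l1 * Tm M k2 A j2 l2) := by
  have hn1 : ((M^k1 : ℕ):ℂ) ≠ 0 :=
    Nat.cast_ne_zero.mpr (pow_pos hM k1).ne'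
  have hn2 : ((M^k2 : ℕ):ℂ) ≠ 0 :=
    Nat.cast_ne_zero.mpr (pow_pos hM k2).ne'
  have hNc : ((M^(k1+k2) : ℕ):ℂ) = ((M^k1 * M^k2 : ℕ):ℂ) := by
    rw [pow_add]
  have hjmem : (((eR M k1 k2 (j1,j2)) : ℕ) ∈ cantorDigits M (k1+k2) A)
      ↔ ((j1:ℕ) ∈ cantorDigits M k1 A ∧ (j2:ℕ) ∈ cantorDigits M k2 A) := by
    rw [eR_coe]
    have h := cantor_split M hM A k2 k1 (j2:ℕ) (j1:ℕ) j2.2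
    rw [show k2 + k1 = k1 + k2 by omega] at h
    rw [h]; tauto
  have hlmem : (((eCq M k1 k2 (l2,l1)) : ℕ) ∈ cantorDigits M (k1+k2) A)
      ↔ ((l1:ℕ) ∈ cantorDigits M k1 A ∧ (l2:ℕ) ∈ cantorDigits M k2 A) :=
    eCq_coe M k1 k2 (l2,l1) ▸ cantor_split M hM A k1 k2 (l1:ℕ) (l2:ℕ) l1.2
  have hcastR : (((eR M k1 k2 (j1,j2) : Fin (M^(k1+k2))) : ℕ) : ℂ)
      = (((j2:ℕ) + M^k2 * (j1:ℕ) : ℕ) : ℂ) := by rw [eR_coe]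
  have hcastC : (((eCq M k1 k2 (l2,l1) : Fin (M^(k1+k2))) : ℕ) : ℂ)
      = (((l1:ℕ) + M^k1 * (l2:ℕ) : ℕ) : ℂ) := by rw [eCq_coe]
  have hdft : dftMat (M^(k1+k2)) (eR M k1 k2 (j1,j2)) (eCq M k1 k2 (l2,l1))
      = (((M^k1 : ℕ):ℂ) ^ (-(1/2:ℂ))
          * Complex.exp (-2*(π:ℝ)*I*((j1:ℕ):ℂ)*((l1:ℕ):ℂ)/((M^k1:ℕ):ℂ)))
        * (ph M k1 k2 j2 l1
          * (((M^k2 : ℕ):ℂ) ^ (-(1/2:ℂ))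
            * Complex.exp (-2*(π:ℝ)*I*((j2:ℕ):ℂ)*((l2:ℕ):ℂ)/((M^k2:ℕ):ℂ)))) := by
    simp only [dftMat, Matrix.of_apply]
    rw [hcastR, hcastC, hNc, cpow_split,
      exp_split (M^k1) (M^k2) hn1 hn2 (j1:ℕ) (l1:ℕ) (j2:ℕ) (l2:ℕ)]
    simp only [ph]
    rw [hNc]
    ring
  have e1 : Tm M (k1+k2) A (eR M k1 k2 (j1, j2)) (eCq M k1 k2 (l2, l1))
      = (if ((eR M k1 k2 (j1,j2)) : ℕ) ∈ cantorDigits M (k1+k2) A then (1:ℂ) else 0)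
        * dftMat (M^(k1+k2)) (eR M k1 k2 (j1,j2)) (eCq M k1 k2 (l2,l1))
        * (if ((eCq M k1 k2 (l2,l1)) : ℕ) ∈ cantorDigits M (k1+k2) A then (1:ℂ) else 0) :=
    tmat_entry _ _ _ _
  have e2 : Tm M k1 A j1 l1
      = (if (j1 : ℕ) ∈ cantorDigits M k1 A then (1:ℂ) else 0)
        * dftMat (M^k1) j1 l1
        * (if (l1 : ℕ) ∈ cantorDigits M k1 A then (1:ℂ) else 0) :=
    tmat_entry _ _ _ _
  have e3 : Tm M k2 A j2 l2
      = (if (j2 : ℕ) ∈ cantorDigits M k2 A then (1:ℂ) else 0)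
        * dftMat (M^k2) j2 l2
        * (if (l2 : ℕ) ∈ cantorDigits M k2 A then (1:ℂ) else 0) :=
    tmat_entry _ _ _ _
  rw [e1, e2, e3, hdft, if_congr hjmem rfl rfl, if_congr hlmem rfl rfl,
    ite_and_split, ite_and_split]
  simp only [dftMat, Matrix.of_apply]
  ring

lemma mulVec_split (M : ℕ) (hM : 0 < M) (A : Finset ℕ) (k1 k2 : ℕ)
    (u : Fin (M^(k1+k2)) → ℂ) (j1 : Fin (M^k1)) (j2 : Fin (M^k2)) :
    (Tm M (k1+k2) A *ᵥ u) (eR M k1 k2 (j1, j2))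
      = (Tm M k1 A *ᵥ fun l1 =>
          ph M k1 k2 j2 l1 * (Tm M k2 A *ᵥ fun l2 => u (eCq M k1 k2 (l2, l1))) j2) j1 := by
  simp only [Matrix.mulVec, dotProduct]
  calc ∑ l, Tm M (k1+k2) A (eR M k1 k2 (j1, j2)) l * u l
      = ∑ q : Fin (M^k2) × Fin (M^k1),
          Tm M (k1+k2) A (eR M k1 k2 (j1, j2)) (eCq M k1 k2 q) * u (eCq M k1 k2 q) :=
        (Equiv.sum_comp (eCq M k1 k2) _).symm
    _ = ∑ l2 : Fin (M^k2), ∑ l1 : Fin (M^k1),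
          (Tm M k1 A j1 l1 * (ph M k1 k2 j2 l1 * Tm M k2 A j2 l2)) * u (eCq M k1 k2 (l2, l1)) := by
        rw [Fintype.sum_prod_type]
        exact Finset.sum_congr rfl fun l2 _ => Finset.sum_congr rfl fun l1 _ => by
          rw [entry_split M hM A k1 k2 j1 l1 j2 l2]
    _ = ∑ l1 : Fin (M^k1), ∑ l2 : Fin (M^k2),
          (Tm M k1 A j1 l1 * (ph M k1 k2 j2 l1 * Tm M k2 A j2 l2)) * u (eCq M k1 k2 (l2, l1)) :=
        Finset.sum_comm
    _ = ∑ l1 : Fin (M^k1), Tm M k1 A j1 l1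
          * (ph M k1 k2 j2 l1 * ∑ l2 : Fin (M^k2), Tm M k2 A j2 l2 * u (eCq M k1 k2 (l2, l1))) := by
        refine Finset.sum_congr rfl fun l1 _ => ?_
        rw [Finset.mul_sum, Finset.mul_sum]
        exact Finset.sum_congr rfl fun l2 _ => by ring

lemma key_bound (M : ℕ) (hM : 0 < M) (A : Finset ℕ) (k1 k2 : ℕ)
    (u : Fin (M^(k1+k2)) → ℂ) :
    ∑ j, ‖(Tm M (k1+k2) A *ᵥ u) j‖^2
      ≤ (rk M A k1 * rk M A k2)^2 * ∑ j, ‖u j‖^2 := by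
  have hr1 : 0 ≤ rk M A k1 := norm_nonneg _
  have hr2 : 0 ≤ rk M A k2 := norm_nonneg _
  calc ∑ j, ‖(Tm M (k1+k2) A *ᵥ u) j‖^2
      = ∑ p : Fin (M^k1) × Fin (M^k2), ‖(Tm M (k1+k2) A *ᵥ u) (eR M k1 k2 p)‖^2 :=
        (Equiv.sum_comp (eR M k1 k2) _).symm
    _ = ∑ j1 : Fin (M^k1), ∑ j2 : Fin (M^k2),
          ‖(Tm M k1 A *ᵥ fun l1 =>
            ph M k1 k2 j2 l1 * (Tm M k2 A *ᵥ fun l2 => u (eCq M k1 k2 (l2, l1))) j2) j1‖^2 := by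
        rw [Fintype.sum_prod_type]
        exact Finset.sum_congr rfl fun j1 _ => Finset.sum_congr rfl fun j2 _ => by
          rw [mulVec_split M hM A k1 k2 u j1 j2]
    _ = ∑ j2 : Fin (M^k2), ∑ j1 : Fin (M^k1),
          ‖(Tm M k1 A *ᵥ fun l1 =>
            ph M k1 k2 j2 l1 * (Tm M k2 A *ᵥ fun l2 => u (eCq M k1 k2 (l2, l1))) j2) j1‖^2 :=
        Finset.sum_comm
    _ ≤ ∑ j2 : Fin (M^k2), (rk M A k1)^2 * ∑ l1 : Fin (M^k1),
          ‖ph M k1 k2 j2 l1 * (Tm M k2 A *ᵥ fun l2 => u (eCq M k1 k2 (l2, l1))) j2‖^2 :=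
        Finset.sum_le_sum fun j2 _ => sq_bound M k1 A _
    _ = (rk M A k1)^2 * ∑ l1 : Fin (M^k1), ∑ j2 : Fin (M^k2),
          ‖(Tm M k2 A *ᵥ fun l2 => u (eCq M k1 k2 (l2, l1))) j2‖^2 := by
        rw [← Finset.mul_sum, Finset.sum_comm]
        congr 1
        exact Finset.sum_congr rfl fun j2 _ => Finset.sum_congr rfl fun l1 _ => by
          rw [norm_mul, norm_ph, one_mul]
    _ ≤ (rk M A k1)^2 * ∑ l1 : Fin (M^k1), (rk M A k2)^2 * ∑ l2 : Fin (M^k2),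
          ‖u (eCq M k1 k2 (l2, l1))‖^2 := by
        refine mul_le_mul_of_nonneg_left (Finset.sum_le_sum fun l1 _ => ?_) (sq_nonneg _)
        exact sq_bound M k2 A _
    _ = (rk M A k1 * rk M A k2)^2
          * ∑ q : Fin (M^k2) × Fin (M^k1), ‖u (eCq M k1 k2 q)‖^2 := by
        rw [← Finset.mul_sum, Fintype.sum_prod_type, Finset.sum_comm]
        ring
    _ = (rk M A k1 * rk M A k2)^2 * ∑ j, ‖u j‖^2 := by
        rw [Equiv.sum_comp (eCq M k1 k2) (fun j => ‖u j‖^2)]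

end Aux

/-- Submultiplicativity: `r_{k₁+k₂} ≤ r_{k₁} · r_{k₂}`. -/
theorem stmt8 (M : ℕ) (hM : 3 ≤ M) (A : Finset ℕ) (hA : A.Nonempty)
    (hAM : ∀ a ∈ A, a < M) (k1 k2 : ℕ) (h1 : 1 ≤ k1) (h2 : 1 ≤ k2) :
    rk M A (k1 + k2) ≤ rk M A k1 * rk M A k2 := by
  have hM0 : 0 < M := by omega
  have hrr : 0 ≤ rk M A k1 * rk M A k2 :=
    mul_nonneg (norm_nonneg _) (norm_nonneg _)
  refine ContinuousLinearMap.opNorm_le_bound _ hrr fun u => ?_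
  have happ : cantorOp M (k1+k2) A u
      = (WithLp.equiv 2 (Fin (M^(k1+k2)) → ℂ)).symm
          (Tm M (k1+k2) A *ᵥ fun j => u j) := by
    simp only [cantorOp, LinearMap.coe_toContinuousLinearMap']
    have : u = (WithLp.equiv 2 (Fin (M^(k1+k2)) → ℂ)).symm (fun j => u j) := rfl
    rw [this]
    exact Matrix.toEuclideanLin_apply_piLp_toLp _ _
  rw [happ, EuclideanSpace.norm_eq, EuclideanSpace.norm_eq]
  simp only [WithLp.equiv_symm_apply, WithLp.ofLp_toLp, PiLp.toLp_apply]
  have hkey := key_bound M hM0 A k1 k2 (fun j => u j)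
  calc Real.sqrt (∑ i, ‖(Tm M (k1+k2) A *ᵥ fun j => u j) i‖^2)
      ≤ Real.sqrt ((rk M A k1 * rk M A k2)^2 * ∑ j, ‖u j‖^2) := Real.sqrt_le_sqrt hkey
    _ = rk M A k1 * rk M A k2 * Real.sqrt (∑ j, ‖u j‖^2) := by
        rw [Real.sqrt_mul (sq_nonneg _), Real.sqrt_sq hrr]
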